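/- If K ⊆ [0,1] is a Cantor set of Lebesgue measure zero with {0,1} ⊆ K, then there exists φ ∈ 𝒢 such that K = K_φ. -/

import Mathlib

open Set MeasureTheory

/-- The set `D` of dyadic rationals in `(0,1)`. -/
def dyadics : Set ℝ :=
  {x : ℝ | ∃ i k : ℕ, 0 < i ∧ 0 < k ∧ i < 2 ^ k ∧ x = (i : ℝ) / 2 ^ k}

set_option linter.unusedVariables false
set_option linter.unusedSectionVars false

lemma dy_mid {a b : ℝ} (ha : ∃ i k : ℕ, a = (i:ℝ)/2^k) (hb : ∃ i k : ℕ, b = (i:ℝ)/2^k) :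
    ∃ i k : ℕ, (a+b)/2 = (i:ℝ)/2^k := by
  obtain ⟨i, k, rfl⟩ := ha; obtain ⟨j, m, rfl⟩ := hb
  refine ⟨i*2^m + j*2^k, k+m+1, ?_⟩
  have e1 : (2:ℝ)^k ≠ 0 := by positivity
  have e2 : (2:ℝ)^m ≠ 0 := by positivity
  have e3 : (2:ℝ)^(k+m+1) ≠ 0 := by positivity
  push_cast
  rw [div_add_div _ _ e1 e2, div_div, pow_succ, pow_add]
  congr 1
  ring

lemma mem_dyadics_iff {x : ℝ} :
    x ∈ dyadics ↔ (∃ i k : ℕ, x = (i:ℝ)/2^k) ∧ 0 < x ∧ x < 1 := by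
  constructor
  · rintro ⟨i, k, hi, hk, hik, rfl⟩
    refine ⟨⟨i, k, rfl⟩, by positivity, ?_⟩
    rw [div_lt_one (by positivity)]
    exact_mod_cast hik
  · rintro ⟨⟨i, k, rfl⟩, hx0, hx1⟩
    have h2 : (0:ℝ) < 2 ^ k := by positivity
    have hi : 0 < i := by
      by_contra h
      simp [Nat.le_zero.mp (not_lt.mp h)] at hx0
    have hik : i < 2 ^ k := by
      rw [div_lt_one h2] at hx1
      exact_mod_cast hx1
    refine ⟨2*i, k+1, by omega, by omega, by
      have : 2 * i < 2 * 2 ^ k := by omega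
      simpa [pow_succ, mul_comm] using this, ?_⟩
    push_cast
    rw [pow_succ]
    field_simp

lemma dyadics_countable : dyadics.Countable := by
  have h : dyadics ⊆ Set.range (fun p : ℕ × ℕ => (p.1 : ℝ) / 2 ^ p.2) := by
    rintro x ⟨i, k, _, _, _, rfl⟩; exact ⟨(i, k), rfl⟩
  exact (Set.countable_range _).mono h

instance : Countable ↥dyadics := dyadics_countable.to_subtype

instance : Nonempty ↥dyadics :=
  ⟨⟨1/2, mem_dyadics_iff.mpr ⟨⟨1, 1, by norm_num⟩, by norm_num, by norm_num⟩⟩⟩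

instance : DenselyOrdered ↥dyadics := by
  constructor
  rintro ⟨a, ha⟩ ⟨b, hb⟩ h
  rw [Subtype.mk_lt_mk] at h
  rw [mem_dyadics_iff] at ha hb
  refine ⟨⟨(a+b)/2, mem_dyadics_iff.mpr
    ⟨dy_mid ha.1 hb.1, by linarith [ha.2.1], by linarith [hb.2.2]⟩⟩,
    Subtype.mk_lt_mk.mpr (by linarith), Subtype.mk_lt_mk.mpr (by linarith)⟩

instance : NoMinOrder ↥dyadics := by
  constructor
  rintro ⟨a, ha⟩
  rw [mem_dyadics_iff] at ha
  have : ∃ i k : ℕ, (0 + a)/2 = (i:ℝ)/2^k := dy_mid ⟨0, 0, by norm_num⟩ ha.1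
  refine ⟨⟨a/2, mem_dyadics_iff.mpr ⟨by simpa using this, by linarith [ha.2.1],
    by linarith [ha.2.1, ha.2.2]⟩⟩, Subtype.mk_lt_mk.mpr (by linarith [ha.2.1])⟩

instance : NoMaxOrder ↥dyadics := by
  constructor
  rintro ⟨a, ha⟩
  rw [mem_dyadics_iff] at ha
  refine ⟨⟨(a+1)/2, mem_dyadics_iff.mpr ⟨dy_mid ha.1 ⟨1, 0, by norm_num⟩,
    by linarith [ha.2.1], by linarith [ha.2.2]⟩⟩, Subtype.mk_lt_mk.mpr (by linarith [ha.2.2])⟩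

noncomputable def rK (K : Set ℝ) (a : ℝ) : ℝ := sInf (K ∩ Set.Ioi a)

def GK (K : Set ℝ) : Set ℝ := {a | a ∈ K ∧ a < 1 ∧ a < rK K a}

section Gaps

variable {K : Set ℝ} (hsub : K ⊆ Set.Icc 0 1) (hclosed : IsClosed K)
  (hperf : Perfect K) (hnoint : ∀ a b : ℝ, a < b → ¬ Set.Ioo a b ⊆ K)
  (h0 : (0:ℝ) ∈ K) (h1 : (1:ℝ) ∈ K)

lemma rK_bdd (a : ℝ) : BddBelow (K ∩ Set.Ioi a) := ⟨a, fun y hy => le_of_lt hy.2⟩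

include hclosed h1 in
lemma rK_mem {a : ℝ} (ha : a < 1) : rK K a ∈ K ∧ a ≤ rK K a := by
  have hS : (K ∩ Set.Ioi a).Nonempty := ⟨1, h1, ha⟩
  have hcl : closure (K ∩ Set.Ioi a) ⊆ K ∩ Set.Ici a :=
    closure_minimal (Set.inter_subset_inter_right _ Set.Ioi_subset_Ici_self)
      (hclosed.inter isClosed_Ici)
  have := hcl (csInf_mem_closure hS (rK_bdd a))
  exact ⟨this.1, this.2⟩

lemma gap_empty (a : ℝ) : Set.Ioo a (rK K a) ∩ K = ∅ := by
  rw [Set.eq_empty_iff_forall_notMem]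
  rintro x ⟨hx, hxK⟩
  exact absurd (csInf_le (rK_bdd a) ⟨hxK, hx.1⟩) (not_le.mpr hx.2)

include hclosed h0 h1 in
lemma gapLeft {x : ℝ} (hx : x ∈ Set.Ioo (0:ℝ) 1) (hxK : x ∉ K) :
    ∃ a ∈ GK K, x ∈ Set.Ioo a (rK K a) := by
  set l := sSup (K ∩ Set.Iic x) with hl
  have hSne : (K ∩ Set.Iic x).Nonempty := ⟨0, h0, le_of_lt hx.1⟩
  have hSbdd : BddAbove (K ∩ Set.Iic x) := ⟨x, fun y hy => hy.2⟩
  have hlmem : l ∈ K ∩ Set.Iic x := (hclosed.inter isClosed_Iic).csSup_mem hSne hSbdd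
  have hlx : l < x := lt_of_le_of_ne hlmem.2 (fun h => hxK (h ▸ hlmem.1))
  have hl1 : l < 1 := lt_trans hlx hx.2
  have hxr : x ≤ rK K l := by
    refine le_csInf ⟨1, h1, hl1⟩ ?_
    rintro y ⟨hyK, hyl⟩
    by_contra h
    exact absurd (le_csSup hSbdd ⟨hyK, le_of_lt (not_le.mp h)⟩) (not_le.mpr hyl)
  have hxr' : x < rK K l :=
    lt_of_le_of_ne hxr (fun h => hxK (h ▸ (rK_mem hclosed h1 hl1).1))
  exact ⟨l, ⟨hlmem.1, hl1, lt_trans hlx hxr'⟩, hlx, hxr'⟩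

include hperf in
lemma no_isolated {b u v : ℝ} (hb : b ∈ K) (hu : u < b) (hv : b < v)
    (hU : Set.Ioo u b ∩ K = ∅) (hV : Set.Ioo b v ∩ K = ∅) : False := by
  have hacc := hperf.acc b hb
  rw [accPt_iff_nhds] at hacc
  obtain ⟨y, ⟨hy1, hy2⟩, hyb⟩ := hacc (Set.Ioo u v) (Ioo_mem_nhds hu hv)
  rcases lt_or_gt_of_ne hyb with h | h
  · exact Set.eq_empty_iff_forall_notMem.mp hU y ⟨⟨hy1.1, h⟩, hy2⟩
  · exact Set.eq_empty_iff_forall_notMem.mp hV y ⟨⟨h, hy1.2⟩, hy2⟩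

include hsub hperf in
lemma GK_pos {a : ℝ} (ha : a ∈ GK K) : 0 < a := by
  rcases lt_or_eq_of_le (hsub ha.1).1 with h | h
  · exact h
  · exfalso
    refine no_isolated hperf ha.1 (show a - 1 < a by linarith) ha.2.2 ?_ (gap_empty a)
    rw [Set.eq_empty_iff_forall_notMem]
    rintro x ⟨hx, hxK⟩
    exact absurd (hsub hxK).1 (not_le.mpr (h ▸ hx.2))

include hsub hclosed hperf h1 in
lemma rK_lt_one {a : ℝ} (ha : a ∈ GK K) : rK K a < 1 := by
  have hr := rK_mem hclosed h1 ha.2.1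
  rcases lt_or_eq_of_le (hsub hr.1).2 with h | h
  · exact h
  · exfalso
    refine no_isolated hperf hr.1 ha.2.2 (show rK K a < rK K a + 1 by linarith) ?_ ?_
    · exact gap_empty a
    · rw [Set.eq_empty_iff_forall_notMem]
      rintro x ⟨hx, hxK⟩
      exact absurd (hsub hxK).2 (not_le.mpr (h ▸ hx.1))

lemma rK_le_of_lt {a t : ℝ} (ht : t ∈ K) (h : a < t) : rK K a ≤ t :=
  csInf_le (rK_bdd a) ⟨ht, h⟩

include hperf in
lemma rK_lt_of_lt {a a' : ℝ} (ha' : a' ∈ GK K) (h : a < a') : rK K a < a' := by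
  rcases lt_or_eq_of_le (rK_le_of_lt ha'.1 h) with hlt | heq
  · exact hlt
  · exfalso
    exact no_isolated hperf ha'.1 h ha'.2.2 (heq ▸ gap_empty a) (gap_empty a')

lemma le_gapLeft {c w x : ℝ} (hw : w ∈ K) (hwx : w < x) (hc : x ∈ Set.Ioo c (rK K c)) :
    w ≤ c := by
  by_contra h
  have : w ∈ Set.Ioo c (rK K c) ∩ K := ⟨⟨not_le.mp h, lt_trans hwx hc.2⟩, hw⟩
  rw [gap_empty] at this
  exact this

include hsub hclosed hperf hnoint h0 h1 in
lemma GK_dense {a a' : ℝ} (ha : a ∈ GK K) (ha' : a' ∈ GK K) (h : a < a') :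
    ∃ c ∈ GK K, a < c ∧ c < a' := by
  have hra : rK K a < a' := rK_lt_of_lt hperf ha' h
  obtain ⟨x, hxuv, hxK⟩ := Set.not_subset.mp (hnoint _ _ hra)
  have hx01 : x ∈ Set.Ioo (0:ℝ) 1 :=
    ⟨lt_trans (lt_of_le_of_lt (hsub ha.1).1 ha.2.2) hxuv.1, lt_trans hxuv.2 ha'.2.1⟩
  obtain ⟨c, hcG, hcx⟩ := gapLeft hclosed h0 h1 hx01 hxK
  refine ⟨c, hcG, ?_, lt_trans hcx.1 hxuv.2⟩
  exact lt_of_lt_of_le ha.2.2 (le_gapLeft (rK_mem hclosed h1 ha.2.1).1 hxuv.1 hcx)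

include hsub hclosed hperf hnoint h0 h1 in
lemma GK_below {a : ℝ} (ha : a ∈ GK K) : ∃ c ∈ GK K, c < a := by
  obtain ⟨x, hxuv, hxK⟩ := Set.not_subset.mp (hnoint 0 a (GK_pos hsub hperf ha))
  have hx01 : x ∈ Set.Ioo (0:ℝ) 1 := ⟨hxuv.1, lt_trans hxuv.2 ha.2.1⟩
  obtain ⟨c, hcG, hcx⟩ := gapLeft hclosed h0 h1 hx01 hxK
  exact ⟨c, hcG, lt_trans hcx.1 hxuv.2⟩

include hsub hclosed hperf hnoint h0 h1 in
lemma GK_above {a : ℝ} (ha : a ∈ GK K) : ∃ c ∈ GK K, a < c := by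
  have hr1 : rK K a < 1 := rK_lt_one hsub hclosed hperf h1 ha
  obtain ⟨x, hxuv, hxK⟩ := Set.not_subset.mp (hnoint _ _ hr1)
  have hx01 : x ∈ Set.Ioo (0:ℝ) 1 :=
    ⟨lt_trans (lt_of_le_of_lt (hsub ha.1).1 ha.2.2) hxuv.1, hxuv.2⟩
  obtain ⟨c, hcG, hcx⟩ := gapLeft hclosed h0 h1 hx01 hxK
  exact ⟨c, hcG, lt_of_lt_of_le ha.2.2
    (le_gapLeft (rK_mem hclosed h1 ha.2.1).1 hxuv.1 hcx)⟩

include hsub hclosed hperf hnoint h0 h1 in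
lemma GK_nonempty : (GK K).Nonempty := by
  obtain ⟨x, hx, hxK⟩ := Set.not_subset.mp (hnoint 0 1 one_pos)
  obtain ⟨c, hcG, _⟩ := gapLeft hclosed h0 h1 hx hxK
  exact ⟨c, hcG⟩

include hperf in
lemma GK_countable : (GK K).Countable := by
  rw [Set.countable_coe_iff.symm]
  have hq : ∀ a : ↥(GK K), ∃ q : ℚ, (q:ℝ) ∈ Set.Ioo (a:ℝ) (rK K (a:ℝ)) :=
    fun a => exists_rat_btwn a.2.2.2
  choose f hf using hq
  have hinj : Function.Injective f := by
    intro a b hab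
    rcases lt_trichotomy (a:ℝ) (b:ℝ) with h | h | h
    · exfalso
      have h1 := (hf a).2
      have h2 := (hf b).1
      rw [hab] at h1
      exact lt_irrefl _ (lt_trans (lt_trans h2 h1) (rK_lt_of_lt hperf b.2 h))
    · exact Subtype.ext h
    · exfalso
      have h1 := (hf b).2
      have h2 := (hf a).1
      rw [hab] at h2
      exact lt_irrefl _ (lt_trans (lt_trans h2 h1) (rK_lt_of_lt hperf a.2 h))
  exact hinj.countable

include hsub hclosed hnoint hperf h0 h1 in
lemma gaps_union {t : ℝ} (ht : t ∈ K) :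
    ⋃ g : ↥(GK K ∩ Set.Iio t), Set.Ioo (g:ℝ) (rK K (g:ℝ)) = Set.Ioo 0 t \ K := by
  ext x
  simp only [Set.mem_iUnion, Set.mem_diff, Set.mem_Ioo]
  constructor
  · rintro ⟨g, hg1, hg2⟩
    have h0g : (0:ℝ) < g := GK_pos hsub hperf g.2.1
    have hrt : rK K g ≤ t := rK_le_of_lt ht g.2.2
    refine ⟨⟨lt_trans h0g hg1, lt_of_lt_of_le hg2 hrt⟩, ?_⟩
    intro hxK
    exact Set.eq_empty_iff_forall_notMem.mp (gap_empty (g:ℝ)) x ⟨⟨hg1, hg2⟩, hxK⟩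
  · rintro ⟨⟨hx0, hxt⟩, hxK⟩
    have hx01 : x ∈ Set.Ioo (0:ℝ) 1 := ⟨hx0, lt_of_lt_of_le hxt (hsub ht).2⟩
    obtain ⟨c, hcG, hcx⟩ := gapLeft hclosed h0 h1 hx01 hxK
    exact ⟨⟨c, hcG, lt_trans hcx.1 hxt⟩, hcx.1, hcx.2⟩

include hsub hclosed hperf hnoint h0 h1 in
lemma key_sum (hvol : volume K = 0) {t : ℝ} (ht : t ∈ K) :
    HasSum (fun g : ↥(GK K ∩ Set.Iio t) => rK K (g:ℝ) - (g:ℝ)) t := by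
  have hcnt : (GK K ∩ Set.Iio t).Countable := (GK_countable hperf).mono Set.inter_subset_left
  haveI := hcnt.to_subtype
  have hdisj : Pairwise (Function.onFun Disjoint
      (fun g : ↥(GK K ∩ Set.Iio t) => Set.Ioo (g:ℝ) (rK K (g:ℝ)))) := by
    intro g g' hne
    have hne' : (g:ℝ) ≠ (g':ℝ) := fun h => hne (Subtype.ext h)
    rcases (Ne.lt_or_gt hne') with h | h
    · refine Set.disjoint_left.mpr ?_
      rintro x ⟨hx1, hx2⟩ ⟨hy1, _⟩
      exact absurd (lt_of_lt_of_le hx2 (rK_le_of_lt g'.2.1.1 h)) (not_lt.mpr (le_of_lt hy1))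
    · refine Set.disjoint_left.mpr ?_
      rintro x ⟨hx1, _⟩ ⟨_, hy2⟩
      exact absurd (lt_of_lt_of_le hy2 (rK_le_of_lt g.2.1.1 h)) (not_lt.mpr (le_of_lt hx1))
  have hmeas := (MeasureTheory.measure_iUnion (μ := volume) hdisj
    (fun g => measurableSet_Ioo)).symm
  rw [gaps_union hsub hclosed hperf hnoint h0 h1 ht, measure_diff_null hvol,
    Real.volume_Ioo] at hmeas
  have ht0 : (0:ℝ) ≤ t := (hsub ht).1
  have hlen : ∀ g : ↥(GK K ∩ Set.Iio t), volume (Set.Ioo (g:ℝ) (rK K (g:ℝ)))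
      = ENNReal.ofReal (rK K (g:ℝ) - (g:ℝ)) := fun g => Real.volume_Ioo
  rw [tsum_congr hlen] at hmeas
  have hfin : ∑' g : ↥(GK K ∩ Set.Iio t), ENNReal.ofReal (rK K (g:ℝ) - (g:ℝ)) ≠ ⊤ := by
    rw [hmeas]; exact ENNReal.ofReal_ne_top
  have hsumm := ENNReal.summable_toReal hfin
  have heq : (fun g : ↥(GK K ∩ Set.Iio t) => (ENNReal.ofReal (rK K (g:ℝ) - (g:ℝ))).toReal)
      = fun g : ↥(GK K ∩ Set.Iio t) => rK K (g:ℝ) - (g:ℝ) :=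
    funext fun g => ENNReal.toReal_ofReal (le_of_lt (sub_pos.mpr g.2.1.2.2))
  rw [heq] at hsumm
  have htsum : ∑' g : ↥(GK K ∩ Set.Iio t), (rK K (g:ℝ) - (g:ℝ)) = t := by
    rw [← heq, ← ENNReal.tsum_toReal_eq (fun g => ENNReal.ofReal_ne_top), hmeas,
      ENNReal.toReal_ofReal (by linarith)]
    ring
  have := hsumm.hasSum
  rwa [htsum] at this

end Gaps



/-- `φ ∈ 𝒢`: a "gap function", i.e. `φ : D → (0,1)` with `∑_{d ∈ D} φ d = 1`. -/
def IsGapFun (φ : ℝ → ℝ) : Prop :=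
  (∀ d ∈ dyadics, φ d ∈ Set.Ioo (0 : ℝ) 1) ∧ HasSum (fun d : dyadics => φ d) 1

/-- `Φ(d) = ∑_{d' ∈ D, d' < d} φ(d')`. -/
noncomputable def PhiFun (φ : ℝ → ℝ) (d : ℝ) : ℝ :=
  ∑' d' : ↥(dyadics ∩ Set.Iio d), φ d'

/-- `K_φ = [0,1] \ ⋃_{d ∈ D} (Φ(d), Φ(d) + φ(d))`. -/
noncomputable def Kset (φ : ℝ → ℝ) : Set ℝ :=
  Set.Icc 0 1 \ ⋃ d ∈ dyadics, Set.Ioo (PhiFun φ d) (PhiFun φ d + φ d)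

/-- If `K ⊆ [0,1]` is a Cantor set (nonempty, compact, perfect, containing
no nonempty open interval) of Lebesgue measure zero with `{0,1} ⊆ K`, then `K = K_φ`
for some `φ ∈ 𝒢`. -/
theorem stmt_1 (K : Set ℝ) (hsub : K ⊆ Set.Icc 0 1) (hne : K.Nonempty)
    (hcomp : IsCompact K) (hperf : Perfect K)
    (hnoint : ∀ a b : ℝ, a < b → ¬ Set.Ioo a b ⊆ K)
    (hvol : volume K = 0) (h0 : (0 : ℝ) ∈ K) (h1 : (1 : ℝ) ∈ K) :
    ∃ φ : ℝ → ℝ, IsGapFun φ ∧ K = Kset φ := by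
  classical
  have hclosed : IsClosed K := hperf.closed
  haveI hcntG : Countable ↥(GK K) := (GK_countable hperf).to_subtype
  haveI : Nonempty ↥(GK K) := (GK_nonempty hsub hclosed hperf hnoint h0 h1).to_subtype
  haveI : DenselyOrdered ↥(GK K) := by
    constructor
    rintro ⟨a, ha⟩ ⟨b, hb⟩ h
    obtain ⟨c, hc, hc1, hc2⟩ :=
      GK_dense hsub hclosed hperf hnoint h0 h1 ha hb (Subtype.mk_lt_mk.mp h)
    exact ⟨⟨c, hc⟩, Subtype.mk_lt_mk.mpr hc1, Subtype.mk_lt_mk.mpr hc2⟩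
  haveI : NoMinOrder ↥(GK K) := by
    constructor
    rintro ⟨a, ha⟩
    obtain ⟨c, hc, hc1⟩ := GK_below hsub hclosed hperf hnoint h0 h1 ha
    exact ⟨⟨c, hc⟩, Subtype.mk_lt_mk.mpr hc1⟩
  haveI : NoMaxOrder ↥(GK K) := by
    constructor
    rintro ⟨a, ha⟩
    obtain ⟨c, hc, hc1⟩ := GK_above hsub hclosed hperf hnoint h0 h1 ha
    exact ⟨⟨c, hc⟩, Subtype.mk_lt_mk.mpr hc1⟩
  obtain ⟨e⟩ := Order.iso_of_countable_dense (↥dyadics) (↥(GK K))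
  set φ : ℝ → ℝ := fun x =>
    if h : x ∈ dyadics then rK K ((e ⟨x, h⟩ : ↥(GK K)) : ℝ) - ((e ⟨x, h⟩ : ↥(GK K)) : ℝ)
    else 0 with hφdef
  have hφ : ∀ (d : ℝ) (hd : d ∈ dyadics),
      φ d = rK K ((e ⟨d, hd⟩ : ↥(GK K)) : ℝ) - ((e ⟨d, hd⟩ : ↥(GK K)) : ℝ) :=
    fun d hd => dif_pos hd
  -- the key computation of PhiFun
  have key : ∀ (d : ℝ) (hd : d ∈ dyadics), PhiFun φ d = ((e ⟨d, hd⟩ : ↥(GK K)) : ℝ) := by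
    intro d hd
    set g : ↥(GK K) := e ⟨d, hd⟩ with hg
    set t : ℝ := (g : ℝ) with ht
    have htK : t ∈ K := g.2.1
    have hHS := key_sum hsub hclosed hperf hnoint h0 h1 hvol htK
    have hsymm_g : e.symm g = ⟨d, hd⟩ := by rw [hg]; exact e.symm_apply_apply _
    set F : ↥(dyadics ∩ Set.Iio d) → ↥(GK K ∩ Set.Iio t) := fun x =>
      ⟨((e ⟨x.1, x.2.1⟩ : ↥(GK K)) : ℝ), (e ⟨x.1, x.2.1⟩).2, by
        have h2 : (⟨x.1, x.2.1⟩ : ↥dyadics) < ⟨d, hd⟩ := Subtype.mk_lt_mk.mpr x.2.2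
        exact Subtype.coe_lt_coe.mpr (e.strictMono h2)⟩ with hF
    have hFbij : Function.Bijective F := by
      constructor
      · intro a b hab
        have h1 := congrArg Subtype.val hab
        have h2 : e ⟨a.1, a.2.1⟩ = e ⟨b.1, b.2.1⟩ := Subtype.coe_injective h1
        have h3 := e.injective h2
        injection h3 with h4
        exact Subtype.ext h4
      · intro y
        have h2 : (⟨y.1, y.2.1⟩ : ↥(GK K)) < g := Subtype.coe_lt_coe.mp y.2.2
        have h3 := e.symm.strictMono h2
        rw [hsymm_g] at h3
        refine ⟨⟨((e.symm ⟨y.1, y.2.1⟩ : ↥dyadics) : ℝ), (e.symm ⟨y.1, y.2.1⟩).2,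
          Subtype.coe_lt_coe.mpr h3⟩, ?_⟩
        apply Subtype.ext
        show ((e ⟨((e.symm ⟨y.1, y.2.1⟩ : ↥dyadics) : ℝ), _⟩ : ↥(GK K)) : ℝ) = y.1
        rw [Subtype.coe_eta, e.apply_symm_apply]
    set E := Equiv.ofBijective F hFbij with hE
    have htsum := (E.tsum_eq (fun g' : ↥(GK K ∩ Set.Iio t) => rK K (g' : ℝ) - (g' : ℝ)))
    rw [hHS.tsum_eq] at htsum
    rw [PhiFun, ← htsum]
    apply tsum_congr
    intro x
    rw [hφ x.1 x.2.1]
    rfl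
  refine ⟨φ, ⟨?_, ?_⟩, ?_⟩
  · -- φ maps dyadics into (0,1)
    intro d hd
    rw [hφ d hd]
    set g : ↥(GK K) := e ⟨d, hd⟩
    have h1' : (g : ℝ) < rK K (g : ℝ) := g.2.2.2
    have h2' : rK K (g : ℝ) < 1 := rK_lt_one hsub hclosed hperf h1 g.2
    have h3' : 0 < (g : ℝ) := GK_pos hsub hperf g.2
    exact ⟨by linarith, by linarith⟩
  · -- HasSum
    have hHS := key_sum hsub hclosed hperf hnoint h0 h1 hvol h1
    have hG1 : ∀ a ∈ GK K, a < 1 := fun a ha => ha.2.1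
    set F1 : ↥dyadics → ↥(GK K ∩ Set.Iio (1:ℝ)) := fun x =>
      ⟨((e x : ↥(GK K)) : ℝ), (e x).2, (e x).2.2.1⟩ with hF1
    have hF1bij : Function.Bijective F1 := by
      constructor
      · intro a b hab
        have h1' := congrArg Subtype.val hab
        exact e.injective (Subtype.coe_injective h1')
      · intro y
        refine ⟨e.symm ⟨y.1, y.2.1⟩, ?_⟩
        apply Subtype.ext
        show ((e (e.symm ⟨y.1, y.2.1⟩) : ↥(GK K)) : ℝ) = y.1
        rw [e.apply_symm_apply]
    set E1 := Equiv.ofBijective F1 hF1bij with hE1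
    have := (E1.hasSum_iff (f := fun g' : ↥(GK K ∩ Set.Iio (1:ℝ)) => rK K (g' : ℝ) - (g' : ℝ))
      (a := 1)).mpr hHS
    have heq : ((fun g' : ↥(GK K ∩ Set.Iio (1:ℝ)) => rK K (g' : ℝ) - (g' : ℝ)) ∘ E1)
        = fun d : ↥dyadics => φ ↑d := by
      funext x
      show rK K ((e x : ↥(GK K)) : ℝ) - ((e x : ↥(GK K)) : ℝ) = φ ↑x
      rw [hφ x.1 x.2, Subtype.coe_eta]
    rwa [heq] at this
  · -- K = Kset φ
    have hUnion : ⋃ d ∈ dyadics, Set.Ioo (PhiFun φ d) (PhiFun φ d + φ d)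
        = Set.Ioo 0 1 \ K := by
      ext x
      simp only [Set.mem_iUnion, Set.mem_diff, Set.mem_Ioo, exists_prop]
      constructor
      · rintro ⟨d, hd, hx1, hx2⟩
        rw [key d hd] at hx1 hx2
        rw [hφ d hd] at hx2
        set g : ↥(GK K) := e ⟨d, hd⟩
        have hx2' : x < rK K (g : ℝ) := by linarith
        have h2' : rK K (g : ℝ) < 1 := rK_lt_one hsub hclosed hperf h1 g.2
        have h3' : 0 < (g : ℝ) := GK_pos hsub hperf g.2
        refine ⟨⟨by linarith, by linarith⟩, ?_⟩
        intro hxK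
        exact Set.eq_empty_iff_forall_notMem.mp (gap_empty (K := K) (g : ℝ)) x
          ⟨⟨hx1, hx2'⟩, hxK⟩
      · rintro ⟨⟨hx0, hx1⟩, hxK⟩
        obtain ⟨c, hcG, hcx⟩ := gapLeft hclosed h0 h1 ⟨hx0, hx1⟩ hxK
        set d : ↥dyadics := e.symm ⟨c, hcG⟩ with hd
        refine ⟨↑d, d.2, ?_, ?_⟩
        · rw [key ↑d d.2, Subtype.coe_eta]
          rw [hd, e.apply_symm_apply]
          exact hcx.1
        · rw [key ↑d d.2, hφ ↑d d.2, Subtype.coe_eta]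
          rw [hd, e.apply_symm_apply]
          show x < c + (rK K c - c)
          linarith [hcx.2]
    rw [Kset, hUnion]
    ext x
    constructor
    · intro hxK
      exact ⟨hsub hxK, fun h => h.2 hxK⟩
    · rintro ⟨hxI, hxU⟩
      by_contra hxK
      refine hxU ⟨⟨?_, ?_⟩, hxK⟩
      · exact lt_of_le_of_ne hxI.1 (fun h => hxK (h ▸ h0))
      · exact lt_of_le_of_ne hxI.2 (fun h => hxK (h ▸ h1))
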